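/- Let p(z) be a complex polynomial of degree n with k pairwise distinct zeros z_1,...,z_k in the closed unit disc (1 ≤ k ≤ n). Then there exists a complex polynomial t(z) of degree exactly n-k+1 such that t is apolar to p^{(k-1)} (i.e. A_{n-k+1}(p^{(k-1)}, t) = 0) and every zero of t lies in the open disc |z| < 2(n-k+1)/ln 2. -/

import Mathlib

open Polynomial

/-- The apolarity form `A_N(u,v) = Σ_{j=0}^N (-1)^j u_j v_{N-j} / C(N,j)`. -/
noncomputable def apolarSum (N : ℕ) (u v : Polynomial ℂ) : ℂ :=
  ∑ j ∈ Finset.range (N + 1),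
    (-1) ^ j * u.coeff j * v.coeff (N - j) / (N.choose j : ℂ)

noncomputable def Complex.abs : AbsoluteValue ℂ ℝ := NormedField.toAbsoluteValue ℂ

open Finset in
noncomputable def nodeW (s : Finset ℂ) (x : ℂ) : ℂ := ∏ y ∈ s.erase x, (x - y)

noncomputable def nodeS (m : ℕ) (s : Finset ℂ) : ℂ := ∑ x ∈ s, x ^ m / nodeW s x

lemma nodeW_ne_zero {s : Finset ℂ} (x : ℂ) : nodeW s x ≠ 0 := by
  refine Finset.prod_ne_zero_iff.mpr fun y hy => ?_
  exact sub_ne_zero.mpr (Ne.symm (Finset.ne_of_mem_erase hy))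

lemma nodeS_of_lt {s : Finset ℂ} (hs : s.Nonempty) {m : ℕ} (hm : m < s.card) :
    nodeS m s = if m = s.card - 1 then 1 else 0 := by
  classical
  set F : Polynomial ℂ :=
    (∑ x ∈ s, C (x ^ m / nodeW s x) * ∏ y ∈ s.erase x, (X - C y)) - X ^ m with hF
  have heval : ∀ u ∈ s, F.eval u = 0 := by
    intro u hu
    have h1 : (∑ x ∈ s, C (x ^ m / nodeW s x) * ∏ y ∈ s.erase x, (X - C y)).eval u
        = u ^ m := by
      rw [eval_finset_sum, Finset.sum_eq_single_of_mem u hu]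
      · simp only [eval_mul, eval_C, eval_prod, eval_sub, eval_X]
        exact div_mul_cancel₀ _ (nodeW_ne_zero u)
      · intro x hxs hxu
        simp only [eval_mul, eval_C, eval_prod, eval_sub, eval_X]
        rw [Finset.prod_eq_zero (Finset.mem_erase.mpr ⟨Ne.symm hxu, hu⟩) (sub_self u),
          mul_zero]
    simp [hF, h1]
  have hdeg : F.natDegree < s.card := by
    have h2 : F.natDegree ≤ s.card - 1 := by
      refine (natDegree_sub_le _ _).trans (max_le ?_ ?_)
      · refine natDegree_sum_le_of_forall_le _ _ fun x hx => ?_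
        refine (natDegree_C_mul_le _ _).trans ((natDegree_prod_le _ _).trans ?_)
        simp only [natDegree_X_sub_C, Finset.sum_const, smul_eq_mul, mul_one]
        rw [Finset.card_erase_of_mem hx]
      · rw [natDegree_X_pow]; omega
    have := hs.card_pos; omega
  have hF0 : F = 0 := eq_zero_of_natDegree_lt_card_of_eval_eq_zero' F s heval hdeg
  have hco : F.coeff (s.card - 1) = 0 := by rw [hF0, coeff_zero]
  have hcoeff1 : ∀ x ∈ s, (∏ y ∈ s.erase x, (X - C y)).coeff (s.card - 1) = 1 := by
    intro x hx
    have hmon : (∏ y ∈ s.erase x, (X - C y)).Monic :=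
      monic_prod_of_monic _ _ fun y _ => monic_X_sub_C y
    have hnd : (∏ y ∈ s.erase x, (X - C y)).natDegree = s.card - 1 := by
      rw [natDegree_prod _ _ fun y _ => X_sub_C_ne_zero y]
      simp [Finset.card_erase_of_mem hx]
    rw [← hnd]; exact hmon.coeff_natDegree
  rw [hF, coeff_sub, finset_sum_coeff, sub_eq_zero] at hco
  have : ∑ x ∈ s, x ^ m / nodeW s x = (X ^ m : Polynomial ℂ).coeff (s.card - 1) := by
    rw [← hco]
    refine Finset.sum_congr rfl fun x hx => ?_
    rw [coeff_C_mul, hcoeff1 x hx, mul_one]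
  rw [nodeS, this, coeff_X_pow]
  simp only [eq_comm]

lemma nodeS_succ {s : Finset ℂ} {a : ℂ} (ha : a ∈ s) (m : ℕ) :
    nodeS (m + 1) s = a * nodeS m s + nodeS m (s.erase a) := by
  classical
  have h1 : nodeS (m + 1) s
      = a * nodeS m s + ∑ x ∈ s, x ^ m * (x - a) / nodeW s x := by
    rw [nodeS, nodeS, Finset.mul_sum, ← Finset.sum_add_distrib]
    refine Finset.sum_congr rfl fun x hx => ?_
    rw [mul_div_assoc', ← add_div]
    congr 1
    ring
  rw [h1]
  congr 1
  rw [← Finset.add_sum_erase _ _ ha]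
  rw [sub_self, mul_zero, zero_div, zero_add]
  refine Finset.sum_congr rfl fun x hx => ?_
  obtain ⟨hxa, hxs⟩ := Finset.mem_erase.mp hx
  have haex : a ∈ s.erase x := Finset.mem_erase.mpr ⟨Ne.symm hxa, ha⟩
  have hw : nodeW s x = (x - a) * nodeW (s.erase a) x := by
    rw [nodeW, ← Finset.mul_prod_erase _ _ haex, nodeW, Finset.erase_right_comm]
  rw [hw, mul_comm (x ^ m) (x - a), mul_div_mul_left _ _ (sub_ne_zero.mpr hxa)]

lemma nodeS_abs_le {m : ℕ} : ∀ {s : Finset ℂ}, s.Nonempty → (∀ x ∈ s, Complex.abs x ≤ 1) →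
    Complex.abs (nodeS m s) ≤ (m.choose (s.card - 1) : ℝ) := by
  induction m with
  | zero =>
    intro s hs hb
    rcases Nat.lt_or_ge s.card 2 with h2 | h2
    · have h1 : s.card = 1 := by have := hs.card_pos; omega
      obtain ⟨a, rfl⟩ := Finset.card_eq_one.mp h1
      simp [nodeS, nodeW]
    · rw [nodeS_of_lt hs (by omega), if_neg (by omega)]
      simp [Nat.choose_eq_zero_of_lt (show 0 < s.card - 1 by omega)]
  | succ m ih =>
    intro s hs hb
    obtain ⟨a, ha⟩ := hs
    have hs : s.Nonempty := ⟨a, ha⟩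
    rcases Nat.lt_or_ge s.card 2 with h2 | h2
    · have h1 : s.card = 1 := by have := hs.card_pos; omega
      obtain ⟨b, rfl⟩ := Finset.card_eq_one.mp h1
      simp only [Finset.mem_singleton] at ha; subst ha
      simp only [nodeS, nodeW, Finset.sum_singleton, Finset.erase_singleton,
        Finset.prod_empty, div_one, Finset.card_singleton]
      simpa using pow_le_one₀ (Complex.abs.nonneg a) (hb a (Finset.mem_singleton_self a))
    · have herase : (s.erase a).Nonempty := by
        rw [← Finset.card_pos, Finset.card_erase_of_mem ha]; omega
      have hb' : ∀ x ∈ s.erase a, Complex.abs x ≤ 1 :=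
        fun x hx => hb x (Finset.mem_of_mem_erase hx)
      have key := nodeS_succ ha m
      calc Complex.abs (nodeS (m + 1) s)
          = Complex.abs (a * nodeS m s + nodeS m (s.erase a)) := by rw [key]
        _ ≤ Complex.abs a * Complex.abs (nodeS m s)
            + Complex.abs (nodeS m (s.erase a)) := by
            rw [← map_mul]; exact Complex.abs.add_le _ _
        _ ≤ 1 * (m.choose (s.card - 1) : ℝ) + (m.choose ((s.erase a).card - 1) : ℝ) := by
            have hA := ih hs hb
            have hB := ih herase hb'
            have hC := hb a ha
            have hD := Complex.abs.nonneg (nodeS m s)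
            nlinarith [Complex.abs.nonneg a]
        _ ≤ ((m + 1).choose (s.card - 1) : ℝ) := by
            rw [one_mul, Finset.card_erase_of_mem ha]
            have h3 : s.card - 1 = (s.card - 2) + 1 := by omega
            have h4 : s.card - 1 - 1 = s.card - 2 := by omega
            rw [h4, h3, Nat.choose_succ_succ, Nat.succ_eq_add_one]
            push_cast
            linarith

lemma key_ineq (n k : ℕ) (hk : 1 ≤ k) (hkn : k ≤ n) (p : Polynomial ℂ) (hp : p.natDegree = n)
    (z : Fin k → ℂ) (hinj : Function.Injective z) (hz : ∀ i, Complex.abs (z i) ≤ 1)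
    (hroot : ∀ i, p.IsRoot (z i)) :
    Complex.abs ((derivative^[k - 1] p).coeff 0) ≤
      ∑ r ∈ Finset.Ico 1 (n - k + 1 + 1), Complex.abs ((derivative^[k - 1] p).coeff r) := by
  classical
  set s : Finset ℂ := Finset.image z Finset.univ with hsdef
  have hcard : s.card = k := by
    rw [hsdef, Finset.card_image_of_injective _ hinj, Finset.card_univ, Fintype.card_fin]
  have hsne : s.Nonempty := by
    rw [← Finset.card_pos, hcard]; omega
  have hmem : ∀ x ∈ s, ∃ i, z i = x := by
    intro x hx
    obtain ⟨i, _, hi⟩ := Finset.mem_image.mp hx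
    exact ⟨i, hi⟩
  have habs : ∀ x ∈ s, Complex.abs x ≤ 1 := by
    intro x hx; obtain ⟨i, rfl⟩ := hmem x hx; exact hz i
  -- the vanishing sum
  have hsum0 : ∑ m ∈ Finset.range (n + 1), p.coeff m * nodeS m s = 0 := by
    have h0 : ∑ x ∈ s, p.eval x / nodeW s x = 0 := by
      refine Finset.sum_eq_zero fun x hx => ?_
      obtain ⟨i, rfl⟩ := hmem x hx
      rw [hroot i, zero_div]
    calc ∑ m ∈ Finset.range (n + 1), p.coeff m * nodeS m s
        = ∑ m ∈ Finset.range (n + 1), ∑ x ∈ s, p.coeff m * x ^ m / nodeW s x := by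
          refine Finset.sum_congr rfl fun m _ => ?_
          rw [nodeS, Finset.mul_sum]
          exact Finset.sum_congr rfl fun x _ => by rw [mul_div_assoc]
      _ = ∑ x ∈ s, ∑ m ∈ Finset.range (n + 1), p.coeff m * x ^ m / nodeW s x :=
          Finset.sum_comm
      _ = ∑ x ∈ s, p.eval x / nodeW s x := by
          refine Finset.sum_congr rfl fun x _ => ?_
          rw [eval_eq_sum_range, hp, Finset.sum_div]
      _ = 0 := h0
  -- extract the (k-1) term
  have hsplit : p.coeff (k - 1) = - ∑ m ∈ Finset.Ico k (n + 1), p.coeff m * nodeS m s := by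
    have hcons : ∑ m ∈ Finset.Ico 0 k, p.coeff m * nodeS m s
        + ∑ m ∈ Finset.Ico k (n + 1), p.coeff m * nodeS m s
        = ∑ m ∈ Finset.range (n + 1), p.coeff m * nodeS m s := by
      rw [Finset.range_eq_Ico]; exact Finset.sum_Ico_consecutive _ (Nat.zero_le k) (by omega)
    have hlow : ∑ m ∈ Finset.Ico 0 k, p.coeff m * nodeS m s = p.coeff (k - 1) := by
      rw [← Finset.range_eq_Ico]
      rw [Finset.sum_eq_single_of_mem (k - 1) (Finset.mem_range.mpr (by omega))]
      · rw [nodeS_of_lt hsne (by omega), hcard, if_pos rfl, mul_one]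
      · intro m hm hne
        rw [nodeS_of_lt hsne (by rw [hcard]; exact Finset.mem_range.mp hm),
          hcard, if_neg hne, mul_zero]
    rw [hlow] at hcons
    rw [← hcons] at hsum0
    linear_combination hsum0
  have hmain : Complex.abs (p.coeff (k - 1)) ≤
      ∑ m ∈ Finset.Ico k (n + 1), Complex.abs (p.coeff m) * (m.choose (k - 1) : ℝ) := by
    rw [hsplit, map_neg_eq_map]
    refine (Complex.abs.sum_le _ _).trans ?_
    refine Finset.sum_le_sum fun m _ => ?_
    rw [map_mul]
    refine mul_le_mul_of_nonneg_left ?_ (Complex.abs.nonneg _)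
    have := nodeS_abs_le (m := m) hsne habs
    rwa [hcard] at this
  -- translate to iterated derivative coefficients
  have hcoeffq : ∀ r : ℕ, (derivative^[k - 1] p).coeff r
      = ((r + (k - 1)).descFactorial (k - 1) : ℂ) * p.coeff (r + (k - 1)) := by
    intro r
    rw [Polynomial.coeff_iterate_derivative, nsmul_eq_mul]
  have habsq : ∀ r : ℕ, Complex.abs ((derivative^[k - 1] p).coeff r)
      = ((r + (k - 1)).descFactorial (k - 1) : ℝ) * Complex.abs (p.coeff (r + (k - 1))) := by
    intro r
    rw [hcoeffq, map_mul]
    congr 1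
    exact Complex.norm_natCast _
  have hRHS : ∑ r ∈ Finset.Ico 1 (n - k + 1 + 1), Complex.abs ((derivative^[k - 1] p).coeff r)
      = ∑ r ∈ Finset.Ico 1 (n - k + 1 + 1),
          ((r + (k - 1)).descFactorial (k - 1) : ℝ) * Complex.abs (p.coeff (r + (k - 1))) :=
    Finset.sum_congr rfl fun r _ => habsq r
  rw [habsq 0, hRHS]
  have hq0 : (((0 + (k - 1)).descFactorial (k - 1) : ℕ) : ℝ)
      = (Nat.factorial (k - 1) : ℝ) := by
    rw [Nat.zero_add, Nat.descFactorial_self]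
  rw [hq0]
  calc (Nat.factorial (k - 1) : ℝ) * Complex.abs (p.coeff (0 + (k - 1)))
      ≤ (Nat.factorial (k - 1) : ℝ) * ∑ m ∈ Finset.Ico k (n + 1),
          Complex.abs (p.coeff m) * (m.choose (k - 1) : ℝ) := by
        rw [Nat.zero_add]
        exact mul_le_mul_of_nonneg_left hmain (by positivity)
    _ = ∑ m ∈ Finset.Ico k (n + 1),
          (m.descFactorial (k - 1) : ℝ) * Complex.abs (p.coeff m) := by
        rw [Finset.mul_sum]
        refine Finset.sum_congr rfl fun m _ => ?_
        rw [Nat.descFactorial_eq_factorial_mul_choose]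
        push_cast
        ring
    _ = ∑ r ∈ Finset.Ico 1 (n - k + 1 + 1),
          ((r + (k - 1)).descFactorial (k - 1) : ℝ) * Complex.abs (p.coeff (r + (k - 1))) := by
        rw [Finset.sum_Ico_eq_sum_range, Finset.sum_Ico_eq_sum_range]
        have hlen : n + 1 - k = n - k + 1 + 1 - 1 := by omega
        rw [← hlen]
        refine Finset.sum_congr rfl fun j hj => ?_
        have h1 : 1 + j + (k - 1) = k + j := by omega
        rw [h1]

lemma abs_multiset_sum (M : Multiset ℂ) :
    Complex.abs M.sum ≤ (M.map Complex.abs).sum := by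
  induction M using Multiset.induction with
  | empty => simp
  | cons a t ih =>
    simp only [Multiset.sum_cons, Multiset.map_cons]
    exact (Complex.abs.add_le _ _).trans (by linarith)

lemma pow_card_le_prod_multiset {M : Multiset ℝ} {R : ℝ} (hR : 0 ≤ R)
    (h : ∀ x ∈ M, R ≤ x) : R ^ Multiset.card M ≤ M.prod := by
  induction M using Multiset.induction with
  | empty => simp
  | cons a t ih =>
    simp only [Multiset.prod_cons, Multiset.card_cons, pow_succ']
    have ha := h a (Multiset.mem_cons_self a t)
    have ht := ih fun x hx => h x (Multiset.mem_cons_of_mem hx)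
    exact mul_le_mul ha ht (pow_nonneg hR _) (hR.trans ha)

lemma exists_small_root (N : ℕ) (hN : 1 ≤ N) (q : Polynomial ℂ) (hq : q.natDegree = N)
    (R : ℝ) (hR : 0 < R) (hpow : (1 + 1 / R) ^ N < 2)
    (hineq : Complex.abs (q.coeff 0) ≤ ∑ r ∈ Finset.Ico 1 (N + 1), Complex.abs (q.coeff r)) :
    ∃ a : ℂ, q.eval a = 0 ∧ Complex.abs a < R := by
  by_contra hcon
  push_neg at hcon
  have hq0 : q.coeff 0 ≠ 0 := by
    intro h
    have h0 : q.eval 0 = 0 := by rw [← coeff_zero_eq_eval_zero, h]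
    exact absurd (hcon 0 h0) (by simpa using hR)
  have hqne : q ≠ 0 := fun h => by rw [h, natDegree_zero] at hq; omega
  have hcr : Multiset.card q.roots = q.natDegree :=
    splits_iff_card_roots.mp (IsAlgClosed.splits q)
  set μ := q.roots with hμ
  set P : ℝ := (μ.map Complex.abs).prod with hP
  have hroots_ge : ∀ x ∈ μ, R ≤ Complex.abs x := fun x hx =>
    hcon x ((mem_roots hqne).mp hx)
  have hlc : q.leadingCoeff ≠ 0 := leadingCoeff_ne_zero.mpr hqne
  -- |q₀| = |lc| * P
  have hfac := C_leadingCoeff_mul_prod_multiset_X_sub_C hcr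
  have hq0P : Complex.abs (q.coeff 0) = Complex.abs q.leadingCoeff * P := by
    rw [coeff_zero_eq_eval_zero]
    conv_lhs => rw [← hfac]
    rw [eval_mul, eval_C, map_mul]
    congr 1
    rw [eval_multiset_prod, Multiset.map_map, map_multiset_prod Complex.abs,
      Multiset.map_map]
    congr 1
    ext x
    simp
    rfl
  -- coefficient bounds
  have hcoeff : ∀ r ∈ Finset.Ico 1 (N + 1),
      Complex.abs (q.coeff r) ≤ Complex.abs (q.coeff 0) * ((N.choose r : ℝ) * (1 / R) ^ r) := by
    intro r hr
    obtain ⟨hr1, hr2⟩ := Finset.mem_Ico.mp hr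
    have hrN : r ≤ N := by omega
    have hesymm : q.coeff r = q.leadingCoeff * (-1) ^ (N - r) * μ.esymm (N - r) := by
      have := Polynomial.coeff_eq_esymm_roots_of_card hcr (k := r) (by omega)
      rwa [hq] at this
    have habs1 : Complex.abs (q.coeff r) = Complex.abs q.leadingCoeff
        * Complex.abs (μ.esymm (N - r)) := by
      rw [hesymm, map_mul, map_mul, map_pow, map_neg_eq_map, map_one, one_pow, mul_one]
    -- bound each subset product
    have hsub : ∀ A ∈ μ.powersetCard (N - r), Complex.abs A.prod ≤ P * (1 / R) ^ r := by
      intro A hA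
      obtain ⟨hAle, hAcard⟩ := Multiset.mem_powersetCard.mp hA
      have hPsplit : P = (A.map Complex.abs).prod * ((μ - A).map Complex.abs).prod := by
        rw [hP]
        conv_lhs => rw [← tsub_add_cancel_of_le hAle]
        rw [Multiset.map_add, Multiset.prod_add, mul_comm]
      have hcardsub : Multiset.card (μ - A) = r := by
        rw [Multiset.card_sub hAle, hAcard, hcr, hq]; omega
      have hge : R ^ r ≤ ((μ - A).map Complex.abs).prod := by
        have := pow_card_le_prod_multiset (M := (μ - A).map Complex.abs) hR.le ?_
        · rwa [Multiset.card_map, hcardsub] at this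
        · intro x hx
          obtain ⟨y, hy, rfl⟩ := Multiset.mem_map.mp hx
          exact hroots_ge y (Multiset.mem_of_le (Multiset.sub_le_self _ _) hy)
      have hAabs : Complex.abs A.prod = (A.map Complex.abs).prod := by
        rw [map_multiset_prod Complex.abs]
      rw [hAabs]
      have h1 : (A.map Complex.abs).prod * R ^ r ≤ P := by
        rw [hPsplit]
        exact mul_le_mul_of_nonneg_left hge (Multiset.prod_nonneg
          (fun x hx => by obtain ⟨y, _, rfl⟩ := Multiset.mem_map.mp hx
                          exact Complex.abs.nonneg y))
      rw [one_div, inv_pow, ← div_eq_mul_inv, le_div_iff₀ (pow_pos hR r)]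
      exact h1
    have hesymm_bound : Complex.abs (μ.esymm (N - r))
        ≤ (N.choose r : ℝ) * (P * (1 / R) ^ r) := by
      rw [Multiset.esymm]
      refine (abs_multiset_sum _).trans ?_
      rw [Multiset.map_map]
      have := Multiset.sum_le_card_nsmul ((μ.powersetCard (N - r)).map
        (Complex.abs ∘ Multiset.prod)) (P * (1 / R) ^ r) ?_
      · rw [Multiset.card_map, Multiset.card_powersetCard, hcr, hq,
          nsmul_eq_mul] at this
        rwa [Nat.choose_symm hrN] at this
      · intro x hx
        obtain ⟨A, hA, rfl⟩ := Multiset.mem_map.mp hx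
        exact hsub A hA
    rw [habs1, hq0P]
    calc Complex.abs q.leadingCoeff * Complex.abs (μ.esymm (N - r))
        ≤ Complex.abs q.leadingCoeff * ((N.choose r : ℝ) * (P * (1 / R) ^ r)) :=
          mul_le_mul_of_nonneg_left hesymm_bound (Complex.abs.nonneg _)
      _ = Complex.abs q.leadingCoeff * P * ((N.choose r : ℝ) * (1 / R) ^ r) := by ring
  -- sum the bounds
  have hsum : ∑ r ∈ Finset.Ico 1 (N + 1), Complex.abs (q.coeff r)
      ≤ Complex.abs (q.coeff 0) * ((1 + 1 / R) ^ N - 1) := by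
    calc ∑ r ∈ Finset.Ico 1 (N + 1), Complex.abs (q.coeff r)
        ≤ ∑ r ∈ Finset.Ico 1 (N + 1),
            Complex.abs (q.coeff 0) * ((N.choose r : ℝ) * (1 / R) ^ r) :=
          Finset.sum_le_sum hcoeff
      _ = Complex.abs (q.coeff 0)
            * ∑ r ∈ Finset.Ico 1 (N + 1), (N.choose r : ℝ) * (1 / R) ^ r := by
          rw [Finset.mul_sum]
      _ = Complex.abs (q.coeff 0) * ((1 + 1 / R) ^ N - 1) := by
          congr 1
          have hbin : ∑ r ∈ Finset.range (N + 1), (1 / R) ^ r * 1 ^ (N - r)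
              * (N.choose r : ℝ) = (1 / R + 1) ^ N := (add_pow _ _ _).symm
          simp only [one_pow, mul_one] at hbin
          have hsplit2 : ∑ r ∈ Finset.range (N + 1), (1 / R) ^ r * (N.choose r : ℝ)
              = (1 / R) ^ 0 * (N.choose 0 : ℝ)
                + ∑ r ∈ Finset.Ico 1 (N + 1), (1 / R) ^ r * (N.choose r : ℝ) := by
            rw [Finset.range_eq_Ico]
            exact Finset.sum_eq_sum_Ico_succ_bot (by omega) _
          rw [hsplit2] at hbin
          simp only [pow_zero, Nat.choose_zero_right, Nat.cast_one, one_mul] at hbin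
          have : ∑ r ∈ Finset.Ico 1 (N + 1), (N.choose r : ℝ) * (1 / R) ^ r
              = ∑ r ∈ Finset.Ico 1 (N + 1), (1 / R) ^ r * (N.choose r : ℝ) := by
            exact Finset.sum_congr rfl fun r _ => mul_comm _ _
          rw [this]
          have hco : (1 / R + 1 : ℝ) = 1 + 1 / R := by ring
          rw [← hco]
          linarith
  have hpos : 0 < Complex.abs (q.coeff 0) := Complex.abs.pos hq0
  nlinarith


/-- If `p` has degree `n` with `k` pairwise distinct zeros in the closed unit disc
(`1 ≤ k ≤ n`), then there exists a polynomial `t` of degree exactly `n-k+1` apolar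
to `p^{(k-1)}` whose zeros all lie in the open disc `|z| < 2(n-k+1)/ln 2`. -/
theorem exists_apolar_t (n k : ℕ) (hk : 1 ≤ k) (hkn : k ≤ n)
    (p : Polynomial ℂ) (hp : p.natDegree = n)
    (z : Fin k → ℂ) (hinj : Function.Injective z)
    (hz : ∀ i, ‖z i‖ ≤ 1) (hroot : ∀ i, p.IsRoot (z i)) :
    ∃ t : Polynomial ℂ, t.natDegree = n - k + 1 ∧
      apolarSum (n - k + 1) (derivative^[k - 1] p) t = 0 ∧
      ∀ w : ℂ, t.IsRoot w →
        ‖w‖ < 2 * ((n : ℝ) - k + 1) / Real.log 2 := by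
  classical
  set N := n - k + 1 with hNdef
  have hN1 : 1 ≤ N := by omega
  set q := derivative^[k - 1] p with hqdef
  have hdegq : q.natDegree = N := by
    have hiter : ∀ j, j ≤ k - 1 → (derivative^[j] p).natDegree = n - j := by
      intro j hj
      induction j with
      | zero => simpa using hp
      | succ i ih =>
        have hd := ih (by omega)
        rw [Function.iterate_succ_apply']
        have hpos : 0 < (derivative^[i] p).natDegree := by rw [hd]; omega
        have hdeg := degree_derivative_eq _ hpos
        rw [natDegree_eq_of_degree_eq_some hdeg, hd]
        omega
    rw [hqdef, hiter (k - 1) le_rfl]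
    omega
  have hcastN : ((N : ℕ) : ℝ) = (n : ℝ) - k + 1 := by
    rw [hNdef]
    push_cast [Nat.cast_sub hkn]
    ring
  set R : ℝ := 2 * ((n : ℝ) - k + 1) / Real.log 2 with hRdef
  have hlog : 0 < Real.log 2 := Real.log_pos (by norm_num)
  have hNR : (0 : ℝ) < (N : ℝ) := by positivity
  have hNR' : (0 : ℝ) < (n : ℝ) - k + 1 := by rw [← hcastN]; exact hNR
  have hR : 0 < R := by rw [hRdef]; positivity
  have hpow : (1 + 1 / R) ^ N < 2 := by
    have h1 : 1 + 1 / R ≤ Real.exp (1 / R) := by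
      have := Real.add_one_le_exp (1 / R); linarith
    have h2 : (1 + 1 / R) ^ N ≤ Real.exp (1 / R) ^ N :=
      pow_le_pow_left₀ (by positivity) h1 N
    have h3 : Real.exp (1 / R) ^ N = Real.exp ((N : ℝ) * (1 / R)) :=
      (Real.exp_nat_mul _ N).symm
    have h4 : (N : ℝ) * (1 / R) = Real.log 2 / 2 := by
      rw [hRdef, hcastN]
      field_simp
    have h5 : Real.exp (Real.log 2 / 2) < 2 := by
      conv_rhs => rw [← Real.exp_log (show (0:ℝ) < 2 by norm_num)]
      exact Real.exp_lt_exp.mpr (by linarith)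
    calc (1 + 1 / R) ^ N ≤ Real.exp ((N : ℝ) * (1 / R)) := h3 ▸ h2
      _ < 2 := by rw [h4]; exact h5
  have hineq := key_ineq n k hk hkn p hp z hinj hz hroot
  obtain ⟨a, ha0, haR⟩ := exists_small_root N hN1 q hdegq R hR hpow hineq
  refine ⟨(X - C a) ^ N, ?_, ?_, ?_⟩
  · rw [natDegree_pow, natDegree_X_sub_C, mul_one]
  · show apolarSum N q ((X - C a) ^ N) = 0
    rw [apolarSum]
    have heval : ∑ j ∈ Finset.range (N + 1),
        (-1) ^ j * q.coeff j * ((X - C a) ^ N).coeff (N - j) / (N.choose j : ℂ)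
        = q.eval a := by
      rw [eval_eq_sum_range, hdegq]
      refine Finset.sum_congr rfl fun j hj => ?_
      have hjN : j ≤ N := by
        have := Finset.mem_range.mp hj; omega
      have hcoe : ((X - C a) ^ N).coeff (N - j) = (-a) ^ j * (N.choose j : ℂ) := by
        rw [sub_eq_add_neg, ← map_neg C, coeff_X_add_C_pow, Nat.sub_sub_self hjN,
          Nat.choose_symm hjN]
      rw [hcoe]
      have hch : ((N.choose j : ℕ) : ℂ) ≠ 0 :=
        Nat.cast_ne_zero.mpr (Nat.choose_pos hjN).ne'
      have hsign : ((-1 : ℂ)) ^ j * (-a) ^ j = a ^ j := by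
        rw [← mul_pow, neg_one_mul, neg_neg]
      rw [show (-1 : ℂ) ^ j * q.coeff j * ((-a) ^ j * (N.choose j : ℂ))
          = q.coeff j * a ^ j * (N.choose j : ℂ) by
        linear_combination (q.coeff j * ((N.choose j : ℂ))) * hsign]
      exact mul_div_cancel_right₀ _ hch
    rw [heval, ha0]
  · intro w hw
    have hwa : w = a := by
      have h1 := hw
      rw [IsRoot, eval_pow, eval_sub, eval_X, eval_C] at h1
      have h2 := pow_eq_zero_iff (show N ≠ 0 by omega) |>.mp h1
      exact sub_eq_zero.mp h2
    rw [hwa]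
    exact haR
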